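/- Let g(x) = (η/6)‖x−x₀‖³ on ℝⁿ with η > 0. Then for all x, y ∈ ℝⁿ, the Bregman divergence B_g(x;y) = g(x) − g(y) − ⟨∇g(y), x−y⟩ satisfies B_g(x;y) ≥ (η/12)‖x−y‖³. -/
import Mathlib


open scoped RealInnerProductSpace

/-- Bregman divergence lower bound for g(x) = (η/6)‖x−x₀‖³:
B_g(x;y) = g(x) − g(y) − ⟨∇g(y), x−y⟩ ≥ (η/12)‖x−y‖³, where
∇g(y) = (η/2)‖y−x₀‖(y−x₀). -/
theorem stmt_0 (n : ℕ) (x₀ x y : EuclideanSpace ℝ (Fin n)) (η : ℝ) (hη : 0 < η) :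
    η / 6 * ‖x - x₀‖ ^ 3 - η / 6 * ‖y - x₀‖ ^ 3
      - ⟪(η / 2 * ‖y - x₀‖) • (y - x₀), x - y⟫ ≥ η / 12 * ‖x - y‖ ^ 3 := by
  set a := ‖x - x₀‖ with ha
  set b := ‖y - x₀‖ with hb
  set c := ‖x - y‖ with hc
  have ha0 : 0 ≤ a := norm_nonneg _
  have hb0 : 0 ≤ b := norm_nonneg _
  have hc0 : 0 ≤ c := norm_nonneg _
  have hsum : x - x₀ = (y - x₀) + (x - y) := by abel
  have hsq : a ^ 2 = b ^ 2 + 2 * ⟪y - x₀, x - y⟫ + c ^ 2 := by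
    rw [ha, hsum]; exact norm_add_sq_real _ _
  have htri : c ≤ a + b := by
    have h : x - y = (x - x₀) - (y - x₀) := by abel
    rw [hc, h]
    exact norm_sub_le _ _
  rw [real_inner_smul_left]
  set t := ⟪y - x₀, x - y⟫ with ht
  have ht2 : t = (a ^ 2 - b ^ 2 - c ^ 2) / 2 := by linarith
  have key : (a - b) ^ 2 * (2 * a + b) + c ^ 2 * (3 * b - c) ≥ 0 := by
    rcases le_or_gt c (3 * b) with h | h
    · have h1 : 0 ≤ (a - b) ^ 2 * (2 * a + b) :=
        mul_nonneg (sq_nonneg _) (by linarith)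
      have h2 : 0 ≤ c ^ 2 * (3 * b - c) :=
        mul_nonneg (sq_nonneg _) (by linarith)
      linarith
    · have h1 : c - 2 * b ≤ a - b := by linarith
      have h2 : (0:ℝ) ≤ c - 2 * b := by linarith
      have h3 : (c - 2 * b) ^ 2 ≤ (a - b) ^ 2 := by nlinarith
      have h4 : 2 * c - b ≤ 2 * a + b := by linarith
      have h5 : (c - 2 * b) ^ 2 * (2 * c - b) ≤ (a - b) ^ 2 * (2 * a + b) :=
        mul_le_mul h3 h4 (by linarith) (sq_nonneg _)
      have h6 : (c - 2 * b) ^ 2 * (2 * c - b) - c ^ 2 * (c - 3 * b)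
          = (c - 2 * b) ^ 3 + 4 * b ^ 3 := by ring
      have h7 : (0:ℝ) ≤ (c - 2 * b) ^ 3 := pow_nonneg h2 3
      have h8 : (0:ℝ) ≤ b ^ 3 := pow_nonneg hb0 3
      linarith
  rw [ht2]
  nlinarith [mul_nonneg hη.le key]
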